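/- arXiv:2207.13619 — 3 statements merged into one kernel-verified Lean document; each statement's English description precedes it below -/
import Mathlib

section
/- Let P be a finite nonempty set of points and R a finite set of rays in ℝⁿ, and suppose the pair (α, β) ∈ ℝⁿ × ℝ is an extreme ray of the polyhedral cone {(α, β) : α·p ≥ β for all p ∈ P, α·r ≥ 0 for all r ∈ R}. If α ≠ 0 and conv(P) + cone(R) is full-dimensional, then the inequality α·x ≥ β defines a facet of conv(P) + cone(R), i.e., the set of points of conv(P)+cone(R) satisfying α·x = β has affine dimension n−1. -/
open Pointwise

noncomputable section

/-- Dot product on `ℝⁿ`. -/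
def dot {n : ℕ} (a x : Fin n → ℝ) : ℝ := ∑ i, a i * x i

/-- Conical (nonnegative) hull of a set of rays. -/
def coneHull {n : ℕ} (R : Set (Fin n → ℝ)) : Set (Fin n → ℝ) :=
  {y | ∃ (s : Finset (Fin n → ℝ)) (c : (Fin n → ℝ) → ℝ),
      ↑s ⊆ R ∧ (∀ r ∈ s, 0 ≤ c r) ∧ y = ∑ r ∈ s, c r • r}

/-- The point-ray hull `conv(P) + cone(R)` (Minkowski sum). -/
def pointRayHull {n : ℕ} (P R : Set (Fin n → ℝ)) : Set (Fin n → ℝ) :=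
  convexHull ℝ P + coneHull R

/-- A polyhedron: intersection of finitely many halfspaces. -/
def IsPolyhedron {n : ℕ} (S : Set (Fin n → ℝ)) : Prop :=
  ∃ (m : ℕ) (A : Fin m → (Fin n → ℝ)) (b : Fin m → ℝ),
    S = {x | ∀ i, b i ≤ dot (A i) x}

/-- Recession cone of a set. -/
def recessionCone {n : ℕ} (S : Set (Fin n → ℝ)) : Set (Fin n → ℝ) :=
  {r | ∀ x ∈ S, ∀ t : ℝ, 0 ≤ t → x + t • r ∈ S}

/-- A set is pointed if its recession cone contains no line. -/
def IsPointed {n : ℕ} (S : Set (Fin n → ℝ)) : Prop :=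
  ∀ r ∈ recessionCone S, -r ∈ recessionCone S → r = 0

/-- `x` generates an extreme ray of the cone `C`: it is a nonzero element of `C` that
cannot be written as a sum of two elements of `C` not both parallel to it. -/
def IsExtremeRay {V : Type*} [AddCommGroup V] [Module ℝ V] (C : Set V) (x : V) : Prop :=
  x ∈ C ∧ x ≠ 0 ∧ ∀ y ∈ C, ∀ z ∈ C, x = y + z →
    (∃ t : ℝ, 0 ≤ t ∧ y = t • x) ∧ (∃ t : ℝ, 0 ≤ t ∧ z = t • x)

/-- Affine dimension of a subset of `ℝⁿ`. -/
def affDim {n : ℕ} (S : Set (Fin n → ℝ)) : ℕ :=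
  Module.finrank ℝ (affineSpan ℝ S).direction

/-! helper lemmas -/

lemma dot_add_right {n : ℕ} (a x y : Fin n → ℝ) : dot a (x + y) = dot a x + dot a y := by
  simp [dot, mul_add, Finset.sum_add_distrib]

lemma dot_smul_right {n : ℕ} (a : Fin n → ℝ) (t : ℝ) (x : Fin n → ℝ) :
    dot a (t • x) = t * dot a x := by
  simp only [dot, Finset.mul_sum, Pi.smul_apply, smul_eq_mul]
  exact Finset.sum_congr rfl (fun i _ => by ring)

lemma dot_add_left {n : ℕ} (a b x : Fin n → ℝ) : dot (a + b) x = dot a x + dot b x := by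
  simp [dot, add_mul, Finset.sum_add_distrib]

lemma dot_smul_left {n : ℕ} (t : ℝ) (a x : Fin n → ℝ) : dot (t • a) x = t * dot a x := by
  simp only [dot, Finset.mul_sum, Pi.smul_apply, smul_eq_mul]
  exact Finset.sum_congr rfl (fun i _ => by ring)

lemma dot_sub_right {n : ℕ} (a x y : Fin n → ℝ) : dot a (x - y) = dot a x - dot a y := by
  simp [dot, mul_sub, Finset.sum_sub_distrib]

lemma dot_comm {n : ℕ} (a x : Fin n → ℝ) : dot a x = dot x a := by
  simp [dot, mul_comm]

lemma dot_self_pos {n : ℕ} {a : Fin n → ℝ} (ha : a ≠ 0) : 0 < dot a a := by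
  have h : ∀ i ∈ Finset.univ (α := Fin n), 0 ≤ a i * a i := fun i _ => mul_self_nonneg _
  rcases lt_or_eq_of_le (Finset.sum_nonneg h) with h' | h'
  · exact h'
  · exfalso
    apply ha
    funext i
    have hz := (Finset.sum_eq_zero_iff_of_nonneg h).mp h'.symm i (Finset.mem_univ i)
    have : a i = 0 := by nlinarith
    simpa using this

def dotL {n : ℕ} (a : Fin n → ℝ) : (Fin n → ℝ) →ₗ[ℝ] ℝ where
  toFun := dot a
  map_add' := dot_add_right a
  map_smul' := fun t x => by simpa using dot_smul_right a t x

lemma zero_mem_coneHull {n : ℕ} (R : Set (Fin n → ℝ)) : 0 ∈ coneHull R :=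
  ⟨∅, 0, by simp, by simp, by simp⟩

lemma coneHull_add_smul {n : ℕ} {R : Set (Fin n → ℝ)} {y r : Fin n → ℝ} {t : ℝ}
    (hy : y ∈ coneHull R) (hr : r ∈ R) (ht : 0 ≤ t) : y + t • r ∈ coneHull R := by
  classical
  obtain ⟨s, c, hs, hc, rfl⟩ := hy
  refine ⟨insert r s, fun x => (if x ∈ s then c x else 0) + (if x = r then t else 0),
    ?_, ?_, ?_⟩
  · intro x hx
    rcases Finset.mem_insert.mp (by exact_mod_cast hx) with h | h
    · exact h ▸ hr
    · exact hs h
  · intro x _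
    apply add_nonneg
    · split
      · exact hc x ‹_›
      · exact le_rfl
    · split
      · exact ht
      · exact le_rfl
  · rw [Finset.sum_congr rfl (fun x _ => add_smul (if x ∈ s then c x else 0) _ x),
      Finset.sum_add_distrib]
    congr 1
    · rw [Finset.sum_congr rfl (fun x (_ : x ∈ insert r s) =>
        (by by_cases h : x ∈ s <;> simp [h] :
          (if x ∈ s then c x else 0) • x = if x ∈ s then c x • x else 0))]
      rw [Finset.sum_ite_mem, Finset.inter_eq_right.mpr (Finset.subset_insert r s)]
    · rw [Finset.sum_congr rfl (fun x (_ : x ∈ insert r s) =>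
        (by by_cases h : x = r <;> simp [h] :
          (if x = r then t else 0) • x = if x = r then t • x else 0))]
      simp

lemma mem_hull_of_mem_P {n : ℕ} {P R : Set (Fin n → ℝ)} {p : Fin n → ℝ} (hp : p ∈ P) :
    p ∈ pointRayHull P R :=
  ⟨p, subset_convexHull ℝ P hp, 0, zero_mem_coneHull R, by simp⟩

lemma hull_add_smul {n : ℕ} {P R : Set (Fin n → ℝ)} {x r : Fin n → ℝ} {t : ℝ}
    (hx : x ∈ pointRayHull P R) (hr : r ∈ R) (ht : 0 ≤ t) : x + t • r ∈ pointRayHull P R := by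
  obtain ⟨c, hc, y, hy, rfl⟩ := hx
  exact ⟨c, hc, y + t • r, coneHull_add_smul hy hr ht, (add_assoc c y (t • r)).symm⟩

lemma exists_ortho {n : ℕ} (L : Submodule ℝ (Fin n → ℝ)) (α : Fin n → ℝ) (hα : α ≠ 0)
    (hL : Module.finrank ℝ L + 2 ≤ n) :
    ∃ γ : Fin n → ℝ, (∀ v ∈ L, dot γ v = 0) ∧ ∀ c : ℝ, γ ≠ c • α := by
  classical
  let e : EuclideanSpace ℝ (Fin n) ≃ₗ[ℝ] (Fin n → ℝ) :=
    WithLp.linearEquiv 2 ℝ (Fin n → ℝ)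
  let L' : Submodule ℝ (EuclideanSpace ℝ (Fin n)) := L.map (e.symm : _ →ₗ[ℝ] _)
  have hfr : Module.finrank ℝ L' = Module.finrank ℝ L :=
    LinearEquiv.finrank_map_eq e.symm L
  have horth : Module.finrank ℝ L' + Module.finrank ℝ L'ᗮ = n := by
    have := Submodule.finrank_add_finrank_orthogonal L'
    simpa [finrank_euclideanSpace_fin] using this
  have h2 : 2 ≤ Module.finrank ℝ L'ᗮ := by omega
  have hαE : (e.symm α : EuclideanSpace ℝ (Fin n)) ≠ 0 := by
    intro h
    exact hα (by simpa using congrArg e h)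
  obtain ⟨γ', hγ'K, hγ'span⟩ :
      ∃ γ' : EuclideanSpace ℝ (Fin n), γ' ∈ L'ᗮ ∧ γ' ∉ Submodule.span ℝ {e.symm α} := by
    by_contra h
    push_neg at h
    have hle : L'ᗮ ≤ Submodule.span ℝ {e.symm α} := fun x hx => h x hx
    have := Submodule.finrank_mono hle
    rw [finrank_span_singleton hαE] at this
    omega
  refine ⟨e γ', ?_, ?_⟩
  · intro v hv
    have hv' : e.symm v ∈ L' := Submodule.mem_map_of_mem hv
    have := (Submodule.mem_orthogonal L' γ').mp hγ'K (e.symm v) hv'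
    have hinner : (inner ℝ (e.symm v) γ' : ℝ) = ∑ i, v i * (e γ') i := by
      simp [PiLp.inner_apply, RCLike.inner_apply, conj_trivial]
      exact Finset.sum_congr rfl (fun i _ => mul_comm _ _)
    rw [dot_comm]
    rw [hinner] at this
    simpa [dot] using this
  · intro c hc
    apply hγ'span
    have : γ' = c • e.symm α := by
      apply e.injective
      simpa [map_smul] using hc
    rw [this]
    exact Submodule.smul_mem _ c (Submodule.mem_span_singleton_self _)

/-- If `(α, β)` generates an extreme ray of the cut cone
`{(α, β) : α·p ≥ β ∀ p ∈ P, α·r ≥ 0 ∀ r ∈ R}`, `α ≠ 0`, and the point-ray hull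
`conv(P) + cone(R)` is full-dimensional, then `α·x ≥ β` defines a facet of the point-ray hull:
the set of its points satisfying `α·x = β` has affine dimension `n − 1`. -/
theorem stmt_1 {n : ℕ} (P R : Set (Fin n → ℝ)) (hPfin : P.Finite) (hPne : P.Nonempty)
    (hRfin : R.Finite) (α : Fin n → ℝ) (β : ℝ)
    (hray : IsExtremeRay
      {q : (Fin n → ℝ) × ℝ | (∀ p ∈ P, q.2 ≤ dot q.1 p) ∧ ∀ r ∈ R, 0 ≤ dot q.1 r} (α, β))
    (hα : α ≠ 0)
    (hfull : affDim (pointRayHull P R) = n) :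
    affDim (pointRayHull P R ∩ {x | dot α x = β}) = n - 1 := by
  classical
  obtain ⟨hmemC, hne0, hext⟩ := hray
  have hPineq : ∀ p ∈ P, β ≤ dot α p := hmemC.1
  have hRineq : ∀ r ∈ R, 0 ≤ dot α r := hmemC.2
  set C : Set ((Fin n → ℝ) × ℝ) :=
    {q | (∀ p ∈ P, q.2 ≤ dot q.1 p) ∧ ∀ r ∈ R, 0 ≤ dot q.1 r} with hC
  set S := pointRayHull P R with hS
  set F := S ∩ {x | dot α x = β} with hF
  -- the minimum of `dot α` over `P` equals `β`
  obtain ⟨p₀, hp₀P', hp₀min⟩ := Finset.exists_min_image hPfin.toFinset (fun p => dot α p)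
    (by simpa [Set.Finite.toFinset_nonempty] using hPne)
  have hp₀P : p₀ ∈ P := hPfin.mem_toFinset.mp hp₀P'
  have hβeq : dot α p₀ = β := by
    by_contra hne
    have hlt : β < dot α p₀ := lt_of_le_of_ne (hPineq p₀ hp₀P) (Ne.symm hne)
    have hy : ((α, dot α p₀) : (Fin n → ℝ) × ℝ) ∈ C := by
      refine ⟨fun p hp => hp₀min p (hPfin.mem_toFinset.mpr hp), hRineq⟩
    have hz : ((0, β - dot α p₀) : (Fin n → ℝ) × ℝ) ∈ C := by
      constructor
      · intro p hp
        have h0 : dot (0 : Fin n → ℝ) p = 0 := by simp [dot]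
        show β - dot α p₀ ≤ dot (0 : Fin n → ℝ) p
        rw [h0]; linarith
      · intro r hr; simp [dot]
    obtain ⟨t, ht0, htz⟩ := (hext _ hy _ hz (by rw [Prod.mk_add_mk, add_zero]; congr 1; ring)).2
    have h1 : (0 : Fin n → ℝ) = t • α := congrArg Prod.fst htz
    have ht : t = 0 := by
      rcases smul_eq_zero.mp h1.symm with h | h
      · exact h
      · exact absurd h hα
    have h2 : β - dot α p₀ = t * β := congrArg Prod.snd htz
    rw [ht] at h2; simp at h2; linarith
  have hx₀F : p₀ ∈ F := ⟨mem_hull_of_mem_P hp₀P, hβeq⟩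
  set L := vectorSpan ℝ F with hL
  -- upper bound
  have hLle : L ≤ LinearMap.ker (dotL α) := by
    rw [hL, vectorSpan_def]
    apply Submodule.span_le.mpr
    rintro v ⟨a, ha, b, hb, rfl⟩
    rw [SetLike.mem_coe, LinearMap.mem_ker]
    show dot α (a -ᵥ b) = 0
    rw [vsub_eq_sub, dot_sub_right, ha.2, hb.2, sub_self]
  have hkerlt : LinearMap.ker (dotL α) < ⊤ := by
    rw [lt_top_iff_ne_top]
    intro h
    have : dotL α α = 0 := by
      have : α ∈ LinearMap.ker (dotL α) := h ▸ Submodule.mem_top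
      exact LinearMap.mem_ker.mp this
    exact (dot_self_pos hα).ne' this
  have hLlt : Module.finrank ℝ L < n := by
    have := Submodule.finrank_lt (K := ℝ) (V := Fin n → ℝ) (ne_top_of_lt (lt_of_le_of_lt hLle hkerlt))
    rwa [Module.finrank_fin_fun] at this
  -- lower bound (main argument)
  have hgoal : Module.finrank ℝ L = n - 1 := by
    by_contra hne'
    have hlow : Module.finrank ℝ L + 2 ≤ n := by omega
    obtain ⟨γ, hγL, hγspan⟩ := exists_ortho L α hα hlow
    set δ := dot γ p₀ with hδ
    have hFγ : ∀ x ∈ F, dot γ x = δ := by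
      intro x hx
      have hv : x - p₀ ∈ L := by
        rw [hL]
        have := vsub_mem_vectorSpan ℝ hx hx₀F
        simpa [vsub_eq_sub] using this
      have := hγL _ hv
      rw [dot_sub_right] at this
      linarith
    have hPtight : ∀ p ∈ P, dot α p = β → dot γ p = δ := fun p hp hpe =>
      hFγ p ⟨mem_hull_of_mem_P hp, hpe⟩
    have hRtight : ∀ r ∈ R, dot α r = 0 → dot γ r = 0 := by
      intro r hr hre
      have hmem : p₀ + (1:ℝ) • r ∈ S := hull_add_smul hx₀F.1 hr zero_le_one
      have hmemF : p₀ + (1:ℝ) • r ∈ F := by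
        refine ⟨hmem, ?_⟩
        show dot α (p₀ + (1:ℝ) • r) = β
        rw [dot_add_right, dot_smul_right, hre, hβeq]; ring
      have := hFγ _ hmemF
      rw [dot_add_right, dot_smul_right] at this
      rw [← hδ] at this
      linarith
    -- choice of ε
    set A := hPfin.toFinset.filter (fun p => β < dot α p) with hA
    set B := hRfin.toFinset.filter (fun r => 0 < dot α r) with hB
    set fP : (Fin n → ℝ) → ℝ := fun p => (dot α p - β) / (|dot γ p - δ| + 1) with hfP
    set fR : (Fin n → ℝ) → ℝ := fun r => dot α r / (|dot γ r| + 1) with hfR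
    set T : Finset ℝ := insert 1 (A.image fP ∪ B.image fR) with hT
    have hTne : T.Nonempty := ⟨1, Finset.mem_insert_self _ _⟩
    set ε := T.min' hTne with hε
    have hεpos : 0 < ε := by
      rw [hε]
      apply (Finset.lt_min'_iff T hTne).mpr
      intro b hb
      rcases Finset.mem_insert.mp hb with rfl | hb
      · norm_num
      rcases Finset.mem_union.mp hb with hb | hb
      · obtain ⟨p, hp, rfl⟩ := Finset.mem_image.mp hb
        have := (Finset.mem_filter.mp hp).2
        exact div_pos (by linarith) (by positivity)
      · obtain ⟨r, hr, rfl⟩ := Finset.mem_image.mp hb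
        have := (Finset.mem_filter.mp hr).2
        exact div_pos this (by positivity)
    have hmemC2 : ∀ s0 : ℝ, |s0| ≤ ε → ((α + s0 • γ, β + s0 * δ) : (Fin n → ℝ) × ℝ) ∈ C := by
      intro s0 hs0
      constructor
      · intro p hp
        show β + s0 * δ ≤ dot (α + s0 • γ) p
        rw [dot_add_left, dot_smul_left]
        rcases eq_or_lt_of_le (hPineq p hp) with he | hlt
        · rw [hPtight p hp he.symm, ← he]
        · have hpA : p ∈ A := Finset.mem_filter.mpr ⟨hPfin.mem_toFinset.mpr hp, hlt⟩
          have hεle : ε ≤ fP p := Finset.min'_le T _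
            (Finset.mem_insert_of_mem (Finset.mem_union_left _ (Finset.mem_image_of_mem fP hpA)))
          have hdenom : (0:ℝ) < |dot γ p - δ| + 1 := by positivity
          have h1 : ε * (|dot γ p - δ| + 1) ≤ dot α p - β := by
            rw [hfP] at hεle
            exact (le_div_iff₀ hdenom).mp hεle
          have h2 : |s0 * (dot γ p - δ)| ≤ ε * (|dot γ p - δ| + 1) := by
            rw [abs_mul]
            exact mul_le_mul hs0 (by linarith [abs_nonneg (dot γ p - δ)]) (abs_nonneg _)
              (le_of_lt hεpos)
          have h3 := neg_abs_le (s0 * (dot γ p - δ))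
          have h4 : s0 * (dot γ p - δ) = s0 * dot γ p - s0 * δ := by ring
          linarith
      · intro r hr
        show 0 ≤ dot (α + s0 • γ) r
        rw [dot_add_left, dot_smul_left]
        rcases eq_or_lt_of_le (hRineq r hr) with he | hlt
        · rw [hRtight r hr he.symm, mul_zero, add_zero, ← he]
        · have hrB : r ∈ B := Finset.mem_filter.mpr ⟨hRfin.mem_toFinset.mpr hr, hlt⟩
          have hεle : ε ≤ fR r := Finset.min'_le T _
            (Finset.mem_insert_of_mem (Finset.mem_union_right _ (Finset.mem_image_of_mem fR hrB)))
          have hdenom : (0:ℝ) < |dot γ r| + 1 := by positivity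
          have h1 : ε * (|dot γ r| + 1) ≤ dot α r := by
            rw [hfR] at hεle
            exact (le_div_iff₀ hdenom).mp hεle
          have h2 : |s0 * dot γ r| ≤ ε * (|dot γ r| + 1) := by
            rw [abs_mul]
            exact mul_le_mul hs0 (by linarith [abs_nonneg (dot γ r)]) (abs_nonneg _)
              (le_of_lt hεpos)
          have h3 := neg_abs_le (s0 * dot γ r)
          linarith
    have hconeC : ∀ q ∈ C, ∀ t : ℝ, 0 ≤ t → t • q ∈ C := by
      rintro ⟨a, b⟩ ⟨h1, h2⟩ t ht
      constructor
      · intro p hp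
        show t * b ≤ dot (t • a) p
        rw [dot_smul_left]
        exact mul_le_mul_of_nonneg_left (h1 p hp) ht
      · intro r hr
        show 0 ≤ dot (t • a) r
        rw [dot_smul_left]
        exact mul_nonneg ht (h2 r hr)
    set y : (Fin n → ℝ) × ℝ := (2⁻¹ : ℝ) • (α + ε • γ, β + ε * δ) with hy
    set z : (Fin n → ℝ) × ℝ := (2⁻¹ : ℝ) • (α + (-ε) • γ, β + (-ε) * δ) with hz
    have hyC : y ∈ C := hconeC _ (hmemC2 ε (by rw [abs_of_pos hεpos])) _ (by norm_num)
    have hzC : z ∈ C := hconeC _ (hmemC2 (-ε) (by rw [abs_neg, abs_of_pos hεpos])) _ (by norm_num)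
    have hsum : ((α, β) : (Fin n → ℝ) × ℝ) = y + z := by
      rw [hy, hz, Prod.smul_mk, Prod.smul_mk, Prod.mk_add_mk]
      congr 1
      · module
      · simp only [smul_eq_mul]; ring
    obtain ⟨t, ht0, hty⟩ := (hext y hyC z hzC hsum).1
    have hcomp : (2⁻¹ : ℝ) • (α + ε • γ) = t • α := by
      have := congrArg Prod.fst hty
      simpa [hy] using this
    refine hγspan ((2 * t - 1) / ε) (funext fun i => ?_)
    have hi := congrFun hcomp i
    simp only [Pi.smul_apply, Pi.add_apply, smul_eq_mul] at hi
    have hεne : ε ≠ 0 := ne_of_gt hεpos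
    show γ i = ((2 * t - 1) / ε) * α i
    field_simp
    linarith [hi]
  show affDim F = n - 1
  unfold affDim
  rw [direction_affineSpan]
  exact hgoal
end
end

section
/- For each term t of a disjunction, let pᵗ be an optimal vertex of min{c·x : x ∈ Pᵗ} and Cᵗ ⊇ Pᵗ the basis cone at pᵗ (a simplicial cone with apex pᵗ containing Pᵗ whose extreme rays are the n edge directions at pᵗ). Then the simple point-ray collection P⁰ = {pᵗ : t ∈ T}, R⁰ = {extreme ray directions of Cᵗ : t ∈ T} is proper: any inequality valid for all points of P⁰ (with right-hand side β) and all rays of R⁰ (with right-hand side 0) is valid for cl conv(∪_t Pᵗ). -/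
open Pointwise

noncomputable section

lemma dot_linear {n : ℕ} (a : Fin n → ℝ) : IsLinearMap ℝ (dot a) := by
  constructor
  · intro x y
    simp [dot, mul_add, Finset.sum_add_distrib]
  · intro c x
    simp only [dot, Finset.mul_sum, Pi.smul_apply, smul_eq_mul]
    exact Finset.sum_congr rfl fun i _ => by ring

lemma dot_continuous {n : ℕ} (a : Fin n → ℝ) : Continuous (dot a) := by
  unfold dot
  exact continuous_finset_sum _ fun i _ => (continuous_const.mul (continuous_apply i))

/-- Simple VPCs are valid: if for each term `t` the point `pᵗ` is a `c`-optimal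
vertex of the pointed polyhedron `Pᵗ` and `Cᵗ = pᵗ + cone(r^{t,1},…,r^{t,n})` is a simplicial
basis cone containing `Pᵗ`, then any inequality `α·x ≥ β` with `α·pᵗ ≥ β` for all `t` and
`α·r^{t,j} ≥ 0` for all `t, j` is valid for the disjunctive hull `cl conv(∪ₜ Pᵗ)`. -/
theorem stmt_5 {n : ℕ} {T : Type*} [Fintype T] (c : Fin n → ℝ)
    (Pt : T → Set (Fin n → ℝ)) (hpoly : ∀ t, IsPolyhedron (Pt t))
    (hne : ∀ t, (Pt t).Nonempty) (hpointed : ∀ t, IsPointed (Pt t))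
    (p : T → (Fin n → ℝ)) (hvert : ∀ t, p t ∈ Set.extremePoints ℝ (Pt t))
    (hopt : ∀ t, ∀ x ∈ Pt t, dot c (p t) ≤ dot c x)
    (r : T → Fin n → (Fin n → ℝ))
    (hindep : ∀ t, LinearIndependent ℝ (r t))
    (hcont : ∀ t, Pt t ⊆ {p t} + coneHull (Set.range (r t)))
    (α : Fin n → ℝ) (β : ℝ)
    (hαp : ∀ t, β ≤ dot α (p t))
    (hαr : ∀ t j, 0 ≤ dot α (r t j)) :
    ∀ x ∈ closure (convexHull ℝ (⋃ t, Pt t)), β ≤ dot α x := by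
  have hconv : Convex ℝ {x : Fin n → ℝ | β ≤ dot α x} :=
    convex_halfSpace_ge (dot_linear α) β
  have hclosed : IsClosed {x : Fin n → ℝ | β ≤ dot α x} :=
    isClosed_le continuous_const (dot_continuous α)
  have hsub : (⋃ t, Pt t) ⊆ {x : Fin n → ℝ | β ≤ dot α x} := by
    rintro x hx
    rw [Set.mem_iUnion] at hx
    obtain ⟨t, hxt⟩ := hx
    obtain ⟨a, ha, y, hy, rfl⟩ := hcont t hxt
    rw [Set.mem_singleton_iff] at ha
    subst ha
    obtain ⟨s, co, hs, hco, rfl⟩ := hy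
    have h1 : dot α (p t + ∑ v ∈ s, co v • v)
        = dot α (p t) + ∑ v ∈ s, co v * dot α v := by
      rw [(dot_linear α).map_add]
      congr 1
      simp only [dot, Finset.sum_apply, Pi.smul_apply, smul_eq_mul, Finset.mul_sum]
      rw [Finset.sum_comm]
      exact Finset.sum_congr rfl fun v _ => Finset.sum_congr rfl fun i _ => by ring
    rw [Set.mem_setOf_eq, h1]
    have h2 : 0 ≤ ∑ v ∈ s, co v * dot α v := by
      apply Finset.sum_nonneg
      intro v hv
      obtain ⟨j, rfl⟩ := hs hv
      exact mul_nonneg (hco _ hv) (hαr t j)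
    linarith [hαp t]
  intro x hx
  have := closure_minimal (convexHull_min hsub hconv) hclosed hx
  exact this
end
end

section
/- Let Q ⊆ ℝⁿ be a polyhedron with vertex p, and let K = p + cone(edge directions of Q at p) be the tangent cone of Q at p. If α·x ≥ β is valid for Q and tight at p (α·p = β), then α·x ≥ β is valid for K. -/
open Pointwise

noncomputable section

/-- Let `Q = {x : Ax ≥ b}` be a polyhedron with vertex `p`, and let
`K = {x : aᵢ·x ≥ bᵢ for all i tight at p}` be the tangent cone of `Q` at `p`. Any inequality
`α·x ≥ β` valid for `Q` and tight at `p` is valid for `K`. -/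
theorem stmt_14 {n m : ℕ} (A : Fin m → (Fin n → ℝ)) (b : Fin m → ℝ)
    (Q : Set (Fin n → ℝ)) (hQ : Q = {x | ∀ i, b i ≤ dot (A i) x})
    (p : Fin n → ℝ) (hp : p ∈ Set.extremePoints ℝ Q)
    (K : Set (Fin n → ℝ))
    (hK : K = {x | ∀ i, dot (A i) p = b i → b i ≤ dot (A i) x})
    (α : Fin n → ℝ) (β : ℝ)
    (hvalid : ∀ x ∈ Q, β ≤ dot α x) (htight : dot α p = β) :
    ∀ x ∈ K, β ≤ dot α x := by
  subst hQ hK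
  intro x hx
  have hpQ : ∀ i, b i ≤ dot (A i) p := hp.1
  -- key linearity fact
  have hlin : ∀ (a : Fin n → ℝ) (t : ℝ),
      dot a (p + t • (x - p)) = dot a p + t * (dot a x - dot a p) := by
    intro a t
    simp only [dot, Pi.add_apply, Pi.smul_apply, Pi.sub_apply, smul_eq_mul,
      Finset.mul_sum, ← Finset.sum_add_distrib, Finset.mul_sum, ← Finset.sum_sub_distrib]
    apply Finset.sum_congr rfl
    intro i _
    ring
  classical
  set f : Fin m → ℝ := fun i =>
    if dot (A i) x < dot (A i) p then
      (dot (A i) p - b i) / (dot (A i) p - dot (A i) x) else 1 with hf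
  have hfpos : ∀ i, 0 < f i := by
    intro i
    rw [hf]
    dsimp only
    split_ifs with h
    · apply div_pos
      · rcases lt_or_eq_of_le (hpQ i) with h' | h'
        · linarith
        · have := hx i h'.symm
          linarith
      · linarith
    · norm_num
  set s : Finset ℝ := insert 1 (Finset.univ.image f) with hs
  have hsne : s.Nonempty := ⟨1, Finset.mem_insert_self _ _⟩
  set ε : ℝ := s.min' hsne with he
  have hε1 : ε ≤ 1 := Finset.min'_le _ _ (Finset.mem_insert_self _ _)
  have hεf : ∀ i, ε ≤ f i := fun i =>
    Finset.min'_le _ _ (Finset.mem_insert_of_mem (Finset.mem_image_of_mem f (Finset.mem_univ i)))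
  have hεpos : 0 < ε := by
    have := Finset.min'_mem s hsne
    rw [← he] at this
    rcases Finset.mem_insert.1 this with h | h
    · rw [h]; norm_num
    · rcases Finset.mem_image.1 h with ⟨i, _, hi⟩
      rw [← hi]; exact hfpos i
  have hmem : p + ε • (x - p) ∈ {y | ∀ i, b i ≤ dot (A i) y} := by
    intro i
    rw [hlin]
    rcases le_or_gt (dot (A i) p) (dot (A i) x) with h | h
    · nlinarith [hpQ i, hεpos.le]
    · have h1 : ε ≤ (dot (A i) p - b i) / (dot (A i) p - dot (A i) x) := by
        have := hεf i
        rw [hf] at this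
        simpa [if_pos h] using this
      have h2 : 0 < dot (A i) p - dot (A i) x := by linarith
      have h3 : ε * (dot (A i) p - dot (A i) x) ≤ dot (A i) p - b i :=
        (le_div_iff₀ h2).mp h1
      nlinarith
  have := hvalid _ hmem
  rw [hlin] at this
  rw [htight] at this
  nlinarith
end
end
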